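/- arXiv:2412.08042 — 2 statements merged into one kernel-verified Lean document; each statement's English description precedes it below -/
import Mathlib

section
/- Characterization of the SW estimand (equation (B.2.2)): Assume (A1)–(A3), P(A̲(K−m)=1_m) > 0 and P(A̲(K−m)=0_m) > 0. Then θ_sw^(m) = Σ_{b̄ ∈ {0,1}^{K−m}} 𝔼[Y^{(b̄,1_m)}] · P(Ā(K−m−1)=b̄ | A̲(K−m)=1_m) − Σ_{b̄ ∈ {0,1}^{K−m}} 𝔼[Y^{(b̄,0_m)}] · P(Ā(K−m−1)=b̄ | A̲(K−m)=0_m). -/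
open MeasureTheory Finset
open scoped Classical

namespace MSMPaper

noncomputable section

variable {Ω : Type*} [MeasurableSpace Ω] {𝓛 : Type*}

/-- Conditional probability `P(E | F) = P(E ∩ F) / P(F)` as a real number
(junk value `0` when `P F = 0`). -/
def cP (P : Measure Ω) (E F : Set Ω) : ℝ := (P (E ∩ F)).toReal / (P F).toReal

variable {K : ℕ}

/-- Event `Ā(t−1) = b̄` (treatment history up to, not including, time `t`). -/
def Apast (A : Fin K → Ω → Bool) (t : ℕ) (b : Fin K → Bool) : Set Ω :=
  {ω | ∀ k : Fin K, (k : ℕ) < t → A k ω = b k}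

/-- Event `L̄(t) = l̄` (covariate history up to and including time `t`). -/
def Lpast (L : Fin K → Ω → 𝓛) (t : ℕ) (l : Fin K → 𝓛) : Set Ω :=
  {ω | ∀ k : Fin K, (k : ℕ) ≤ t → L k ω = l k}

/-- Event `A̲(s, t−1) = b` (treatment history from time `s` up to, not including, `t`). -/
def Aseg (A : Fin K → Ω → Bool) (s t : ℕ) (b : Fin K → Bool) : Set Ω :=
  {ω | ∀ k : Fin K, s ≤ (k : ℕ) → (k : ℕ) < t → A k ω = b k}

/-- Event `A̲(K−m) = a̲` for a (last-`m`) treatment vector `as`. -/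
def EtrV (A : Fin K → Ω → Bool) (m : ℕ) (as : Fin K → Bool) : Set Ω :=
  {ω | ∀ k : Fin K, K - m ≤ (k : ℕ) → A k ω = as k}

/-- Event `A̲(K−m) = a_m` (constant `a` on the last `m` coordinates). -/
def Etr (A : Fin K → Ω → Bool) (m : ℕ) (a : Bool) : Set Ω :=
  EtrV A m (fun _ => a)

/-- Stabilized weights `W_sw`. -/
def Wsw (P : Measure Ω) (A : Fin K → Ω → Bool) (L : Fin K → Ω → 𝓛) : Ω → ℝ :=
  fun ω => ∏ k : Fin K,
    cP P {ω' | A k ω' = A k ω} (Apast A (k : ℕ) (fun j => A j ω)) /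
      cP P {ω' | A k ω' = A k ω}
        (Lpast L (k : ℕ) (fun j => L j ω) ∩ Apast A (k : ℕ) (fun j => A j ω))

/-- Restricted stabilized weights `W_rsw^(m)`. -/
def Wrsw (P : Measure Ω) (A : Fin K → Ω → Bool) (L : Fin K → Ω → 𝓛) (m : ℕ) : Ω → ℝ :=
  fun ω => ∏ k ∈ Finset.univ.filter (fun k : Fin K => K - m ≤ (k : ℕ)),
    cP P {ω' | A k ω' = A k ω} (Aseg A (K - m) (k : ℕ) (fun j => A j ω)) /
      cP P {ω' | A k ω' = A k ω}
        (Lpast L (k : ℕ) (fun j => L j ω) ∩ Apast A (k : ℕ) (fun j => A j ω))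

/-- Partial stabilized weights `W_psw^(m)`. -/
def Wpsw (P : Measure Ω) (A : Fin K → Ω → Bool) (L : Fin K → Ω → 𝓛) (m : ℕ) : Ω → ℝ :=
  fun ω => ∏ k ∈ Finset.univ.filter (fun k : Fin K => K - m ≤ (k : ℕ)),
    cP P {ω' | A k ω' = A k ω} (Apast A (k : ℕ) (fun j => A j ω)) /
      cP P {ω' | A k ω' = A k ω}
        (Lpast L (k : ℕ) (fun j => L j ω) ∩ Apast A (k : ℕ) (fun j => A j ω))

/-- IP-weighted contrast `θ_W^(m)`. -/
def θW (P : Measure Ω) (A : Fin K → Ω → Bool) (m : ℕ) (W Y : Ω → ℝ) : ℝ :=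
  (∫ ω in Etr A m true, W ω * Y ω ∂P) / (∫ ω in Etr A m true, W ω ∂P) -
    (∫ ω in Etr A m false, W ω * Y ω ∂P) / (∫ ω in Etr A m false, W ω ∂P)

/-- `rev j` is the time index `K − 1 − j`; the paper's coefficient `ψ_{j+1}`
multiplies `a(K − (j+1)) = a(rev j)`. -/
def rev (j : Fin K) : Fin K := ⟨K - 1 - (j : ℕ), by have := j.isLt; omega⟩

/-- `θ^(K) = 𝔼[Y^{1_K}] − 𝔼[Y^{0_K}]`. -/
def θKfull (P : Measure Ω) (Ypot : (Fin K → Bool) → Ω → ℝ) : ℝ :=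
  (∫ ω, Ypot (fun _ => true) ω ∂P) - ∫ ω, Ypot (fun _ => false) ω ∂P

/-- (A1) consistency. -/
def A1ok (A : Fin K → Ω → Bool) (Y : Ω → ℝ) (Ypot : (Fin K → Bool) → Ω → ℝ) : Prop :=
  ∀ (a : Fin K → Bool) (ω : Ω), (∀ k, A k ω = a k) → Y ω = Ypot a ω

/-- (A2) sequential exchangeability. -/
def A2ok (P : Measure Ω) (A : Fin K → Ω → Bool) (L : Fin K → Ω → 𝓛)
    (Ypot : (Fin K → Bool) → Ω → ℝ) : Prop :=
  ∀ (t : Fin K) (a : Fin K → Bool) (B : Set ℝ), MeasurableSet B →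
    ∀ (av : Bool) (l : Fin K → 𝓛) (b : Fin K → Bool),
      0 < P (Lpast L (t : ℕ) l ∩ Apast A (t : ℕ) b) →
      cP P ({ω | Ypot a ω ∈ B} ∩ {ω | A t ω = av}) (Lpast L (t : ℕ) l ∩ Apast A (t : ℕ) b) =
        cP P {ω | Ypot a ω ∈ B} (Lpast L (t : ℕ) l ∩ Apast A (t : ℕ) b) *
          cP P {ω | A t ω = av} (Lpast L (t : ℕ) l ∩ Apast A (t : ℕ) b)

/-- (A3) positivity. -/
def A3ok (P : Measure Ω) (A : Fin K → Ω → Bool) (L : Fin K → Ω → 𝓛) : Prop :=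
  ∀ (t : Fin K) (av : Bool) (l : Fin K → 𝓛) (b : Fin K → Bool),
    0 < P (Lpast L (t : ℕ) l ∩ Apast A (t : ℕ) b) →
    0 < cP P {ω | A t ω = av} (Lpast L (t : ℕ) l ∩ Apast A (t : ℕ) b)

/-- The marginal structural model `𝔼[Y^{ā}] = ψ₀ + Σ_{j=1}^K ψ_j a(K−j)`;
here `ψ j` is the paper's `ψ_{j+1}`, the coefficient of `a(K−1−j)`. -/
def MSMeq (P : Measure Ω) (Ypot : (Fin K → Bool) → Ω → ℝ) (ψ0 : ℝ) (ψ : Fin K → ℝ) : Prop :=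
  ∀ a : Fin K → Bool,
    (∫ ω, Ypot a ω ∂P) = ψ0 + ∑ j : Fin K, ψ j * (if a (rev j) = true then 1 else 0)

/-- (A5) conditional MSM given the past treatment history `Ā(K−m−1)`. -/
def A5ok (P : Measure Ω) (A : Fin K → Ω → Bool) (Ypot : (Fin K → Bool) → Ω → ℝ)
    (m : ℕ) : Prop :=
  ∀ b : Fin K → Bool, 0 < P (Apast A (K - m) b) →
    ∃ (φ0 : ℝ) (φ : Fin K → ℝ), ∀ a : Fin K → Bool,
      (∫ ω in Apast A (K - m) b, Ypot a ω ∂P) / (P (Apast A (K - m) b)).toReal =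
        φ0 + ∑ j : Fin K, φ j * (if a (rev j) = true then 1 else 0)

/-- `q_{j+1} = P(A(K−1−j)=1 | A̲(K−m)=1_m) − P(A(K−1−j)=1 | A̲(K−m)=0_m)`. -/
def qcoef (P : Measure Ω) (A : Fin K → Ω → Bool) (m : ℕ) (j : Fin K) : ℝ :=
  cP P {ω | A (rev j) ω = true} (Etr A m true) -
    cP P {ω | A (rev j) ω = true} (Etr A m false)

end

noncomputable section

variable {Ω : Type*} [MeasurableSpace Ω] {K : ℕ}

/-- Concatenated regime `(b̄, a̲) ∈ {0,1}^K`: `b̄` on the coordinates before `K−m`,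
`a̲` on the last `m` coordinates. -/
def concatRegime (m : ℕ) (b : {k : Fin K // (k : ℕ) < K - m} → Bool)
    (as : Fin K → Bool) : Fin K → Bool :=
  fun k => if h : (k : ℕ) < K - m then b ⟨k, h⟩ else as k

/-- Event `Ā(K−m−1) = b̄` for a past history `b̄ ∈ {0,1}^{K−m}`. -/
def ApastV (A : Fin K → Ω → Bool) (m : ℕ)
    (b : {k : Fin K // (k : ℕ) < K - m} → Bool) : Set Ω :=
  {ω | ∀ (k : Fin K) (h : (k : ℕ) < K - m), A k ω = b ⟨k, h⟩}

end

/-! ### Auxiliary lemmas for the proof -/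

section AuxSW

open scoped ENNReal

variable {Ω : Type*} [MeasurableSpace Ω] {𝓛 : Type*} [MeasurableSpace 𝓛]
  [Fintype 𝓛] [Nonempty 𝓛] [MeasurableSingletonClass 𝓛] {K : ℕ}

/-- Generic measurability of "history agrees" events for boolean processes. -/
lemma measurableSet_forall_eq {α : Type*} [MeasurableSpace α] [MeasurableSingletonClass α]
    {ι : Type*} [Countable ι] (X : ι → Ω → α) (hX : ∀ k, Measurable (X k))
    (p : ι → Prop) (b : ι → α) :
    MeasurableSet {ω | ∀ k : ι, p k → X k ω = b k} := by
  have : {ω | ∀ k : ι, p k → X k ω = b k}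
      = ⋂ k : ι, {ω | p k → X k ω = b k} := by ext ω; simp
  rw [this]
  refine MeasurableSet.iInter fun k => ?_
  by_cases h : p k
  · have : {ω | p k → X k ω = b k} = X k ⁻¹' {b k} := by ext ω; simp [h]
    rw [this]; exact hX k (measurableSet_singleton _)
  · have : {ω | p k → X k ω = b k} = Set.univ := by ext ω; simp [h]
    rw [this]; exact MeasurableSet.univ

lemma measurableSet_Apast' (A : Fin K → Ω → Bool) (hA : ∀ k, Measurable (A k))
    (t : ℕ) (b : Fin K → Bool) : MeasurableSet (Apast A t b) :=
  measurableSet_forall_eq A hA _ b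

lemma measurableSet_Lpast' (L : Fin K → Ω → 𝓛) (hL : ∀ k, Measurable (L k))
    (t : ℕ) (l : Fin K → 𝓛) : MeasurableSet (Lpast L t l) :=
  measurableSet_forall_eq L hL _ l

lemma measurableSet_Etr' (A : Fin K → Ω → Bool) (hA : ∀ k, Measurable (A k))
    (m : ℕ) (a : Bool) : MeasurableSet (Etr A m a) :=
  measurableSet_forall_eq A hA _ _

lemma measurableSet_Avt (A : Fin K → Ω → Bool) (hA : ∀ k, Measurable (A k))
    (t : Fin K) (av : Bool) : MeasurableSet {ω | A t ω = av} :=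
  hA t (measurableSet_singleton av)

/-- Measurability of functions of the (finite–valued) history. -/
lemma measurable_hist (A : Fin K → Ω → Bool) (L : Fin K → Ω → 𝓛)
    (hA : ∀ k, Measurable (A k)) (hL : ∀ k, Measurable (L k))
    (F : (Fin K → 𝓛) → (Fin K → Bool) → ℝ) :
    Measurable fun ω => F (fun j => L j ω) (fun j => A j ω) := by
  have h1 : Measurable fun ω => ((fun j => L j ω), (fun j => A j ω)) :=
    (measurable_pi_lambda _ hL).prodMk (measurable_pi_lambda _ hA)
  exact (measurable_of_countable (fun p => F p.1 p.2)).comp h1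

/-- A function of the history times an integrable function is integrable. -/
lemma integrable_hist_mul (P : Measure Ω) [IsProbabilityMeasure P]
    (A : Fin K → Ω → Bool) (L : Fin K → Ω → 𝓛)
    (hA : ∀ k, Measurable (A k)) (hL : ∀ k, Measurable (L k))
    (F : (Fin K → 𝓛) → (Fin K → Bool) → ℝ) {Z : Ω → ℝ} (hZ : Integrable Z P) :
    Integrable (fun ω => F (fun j => L j ω) (fun j => A j ω) * Z ω) P := by
  refine hZ.bdd_mul (c := ∑ p : (Fin K → 𝓛) × (Fin K → Bool), |F p.1 p.2|) (measurable_hist A L hA hL F).aestronglyMeasurable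
    (Filter.Eventually.of_forall fun ω => ?_)
  have hmem := Finset.mem_univ (((fun j => L j ω), (fun j => A j ω)) :
    (Fin K → 𝓛) × (Fin K → Bool))
  have hle := Finset.single_le_sum (f := fun p : (Fin K → 𝓛) × (Fin K → Bool) => |F p.1 p.2|)
    (fun p _ => abs_nonneg _) hmem
  simpa using hle

/-- Conditional independence of `Z` and `A t` given the history implies the
set-integral factorization. -/
theorem indep_setIntegral (P : Measure Ω) [IsProbabilityMeasure P]
    {Z : Ω → ℝ} (hZm : Measurable Z)
    {G E : Set Ω} (hGm : MeasurableSet G) (hEm : MeasurableSet E) (hG : 0 < P G)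
    (hind : ∀ B : Set ℝ, MeasurableSet B →
      cP P ({ω | Z ω ∈ B} ∩ E) G = cP P {ω | Z ω ∈ B} G * cP P E G) :
    ∫ ω in E ∩ G, Z ω ∂P = cP P E G * ∫ ω in G, Z ω ∂P := by
  have hGne : P G ≠ 0 := hG.ne'
  have hfin : ∀ s : Set Ω, P s ≠ ⊤ := fun s => measure_ne_top P s
  have hGtR : (P G).toReal ≠ 0 := by
    simp [ENNReal.toReal_eq_zero_iff, hGne, hfin G]
  set q : ℝ≥0∞ := P (E ∩ G) / P G with hq
  have hqfin : q ≠ ⊤ := (ENNReal.div_lt_top (hfin _) hGne).ne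
  have key : ∀ B : Set ℝ, MeasurableSet B →
      P ({ω | Z ω ∈ B} ∩ (E ∩ G)) = q * P ({ω | Z ω ∈ B} ∩ G) := by
    intro B hB
    have h := hind B hB
    set X := {ω | Z ω ∈ B} with hX
    simp only [cP] at h
    have h1 : (P (X ∩ (E ∩ G))).toReal = (q * P (X ∩ G)).toReal := by
      rw [ENNReal.toReal_mul, hq, ENNReal.toReal_div, ← Set.inter_assoc]
      field_simp at h ⊢
      have h2 : (P (X ∩ E ∩ G)).toReal * (P G).toReal
          = (P (X ∩ G)).toReal * (P (E ∩ G)).toReal := by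
        apply mul_right_cancel₀ hGtR
        linear_combination (P G).toReal * h
      linear_combination h2
    exact (ENNReal.toReal_eq_toReal_iff' (hfin _) (ENNReal.mul_ne_top hqfin (hfin _))).mp h1
  have hmap : (P.restrict (E ∩ G)).map Z = q • (P.restrict G).map Z := by
    refine Measure.ext fun B hB => ?_
    rw [Measure.map_apply hZm hB, Measure.smul_apply, Measure.map_apply hZm hB,
      Measure.restrict_apply (hZm hB), Measure.restrict_apply (hZm hB), smul_eq_mul]
    exact key B hB
  have hint1 : ∫ x, x ∂((P.restrict (E ∩ G)).map Z) = ∫ ω in E ∩ G, Z ω ∂P :=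
    integral_map hZm.aemeasurable aestronglyMeasurable_id
  have hint2 : ∫ x, x ∂((P.restrict G).map Z) = ∫ ω in G, Z ω ∂P :=
    integral_map hZm.aemeasurable aestronglyMeasurable_id
  rw [← hint1, ← hint2, hmap, integral_smul_measure, smul_eq_mul]
  congr 1
  rw [hq, ENNReal.toReal_div, cP]

variable (P : Measure Ω)

/-- Value of the inverse-probability product as a function of the history. -/
noncomputable def dD (A : Fin K → Ω → Bool) (L : Fin K → Ω → 𝓛) (c : Fin K → Bool) (t : ℕ) :
    (Fin K → 𝓛) → (Fin K → Bool) → ℝ :=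
  fun l av => if (∀ k : Fin K, (k : ℕ) < t → av k = c k) then
    ∏ k ∈ Finset.univ.filter (fun k : Fin K => (k : ℕ) < t),
      (cP P {ω' | A k ω' = c k} (Lpast L (k : ℕ) l ∩ Apast A (k : ℕ) c))⁻¹
  else 0

/-- The inverse-probability process. -/
noncomputable def dfun (A : Fin K → Ω → Bool) (L : Fin K → Ω → 𝓛) (c : Fin K → Bool) (t : ℕ) :
    Ω → ℝ :=
  fun ω => dD P A L c t (fun j => L j ω) (fun j => A j ω)

lemma dfun_eq {A : Fin K → Ω → Bool} {L : Fin K → Ω → 𝓛} {c : Fin K → Bool} {t : ℕ}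
    {ω : Ω} {l : Fin K → 𝓛}
    (hLt : ∀ j : Fin K, (j : ℕ) < t → L j ω = l j)
    (hAt : ∀ k : Fin K, (k : ℕ) < t → A k ω = c k) :
    dfun P A L c t ω = dD P A L c t l c := by
  unfold dfun dD
  rw [if_pos hAt, if_pos (fun k _ => rfl)]
  refine Finset.prod_congr rfl fun k hk => ?_
  rw [Finset.mem_filter] at hk
  have hset : Lpast L (k : ℕ) (fun j => L j ω) = Lpast L (k : ℕ) l := by
    ext ω'
    simp only [Lpast, Set.mem_setOf_eq]
    exact forall_congr' fun j => forall_congr' fun hj => by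
      rw [hLt j (lt_of_le_of_lt hj hk.2)]
  rw [hset]

/-- Telescoping: the product of the A-propensities equals the probability of the
treatment history. -/
lemma telescope [IsProbabilityMeasure P] (A : Fin K → Ω → Bool) (c : Fin K → Bool) :
    ∀ t, t ≤ K → (P (Apast A t c)).toReal
      = ∏ k ∈ Finset.univ.filter (fun k : Fin K => (k : ℕ) < t),
          cP P {ω' | A k ω' = c k} (Apast A (k : ℕ) c) := by
  intro t
  induction t with
  | zero =>
    intro _
    have h0 : Apast A 0 c = Set.univ := by
      ext ω; simp [Apast]
    have hf : Finset.univ.filter (fun k : Fin K => (k : ℕ) < 0) = ∅ := by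
      apply Finset.filter_false_of_mem; intro k _; omega
    simp [h0, hf]
  | succ t ih =>
    intro ht
    have ht' : t < K := ht
    set tk : Fin K := ⟨t, ht'⟩ with htk
    have hsplit : Apast A (t + 1) c = {ω | A tk ω = c tk} ∩ Apast A t c := by
      ext ω
      simp only [Apast, Set.mem_setOf_eq, Set.mem_inter_iff]
      constructor
      · intro h
        exact ⟨h tk (by simp [htk]), fun k hk => h k (by omega)⟩
      · rintro ⟨h1, h2⟩ k hk
        by_cases hkt : (k : ℕ) < t
        · exact h2 k hkt
        · have : k = tk := by
            apply Fin.ext; simp [htk]; omega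
          rw [this]; exact h1
    have hfil : Finset.univ.filter (fun k : Fin K => (k : ℕ) < t + 1)
        = insert tk (Finset.univ.filter (fun k : Fin K => (k : ℕ) < t)) := by
      ext k
      simp only [Finset.mem_filter, Finset.mem_insert, Finset.mem_univ, true_and]
      constructor
      · intro h
        by_cases hkt : (k : ℕ) < t
        · exact Or.inr hkt
        · exact Or.inl (by apply Fin.ext; simp [htk]; omega)
      · rintro (h | h)
        · subst h; simp [htk]
        · omega
    have hnotmem : tk ∉ Finset.univ.filter (fun k : Fin K => (k : ℕ) < t) := by
      simp [htk]
    rw [hfil, Finset.prod_insert hnotmem, ← ih (by omega)]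
    by_cases hP0 : P (Apast A t c) = 0
    · have h1 : P (Apast A (t + 1) c) = 0 := by
        refine le_antisymm ?_ (zero_le)
        rw [← hP0]
        exact measure_mono (by rw [hsplit]; exact Set.inter_subset_right)
      simp [h1, hP0]
    · have hPt : (P (Apast A t c)).toReal ≠ 0 := by
        simp [ENNReal.toReal_eq_zero_iff, hP0, measure_ne_top P _]
      rw [hsplit]
      unfold cP
      rw [div_mul_cancel₀ _ hPt]

/-- The fundamental IPW identity, by induction on the time horizon. -/
lemma key_integral [IsProbabilityMeasure P]
    (A : Fin K → Ω → Bool) (L : Fin K → Ω → 𝓛)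
    (hA : ∀ k, Measurable (A k)) (hL : ∀ k, Measurable (L k))
    (c : Fin K → Bool) (hA3 : A3ok P A L)
    (Z : Ω → ℝ) (hZm : Measurable Z) (hZi : Integrable Z P)
    (hZ : ∀ (tk : Fin K) (l : Fin K → 𝓛),
      0 < P (Lpast L (tk : ℕ) l ∩ Apast A (tk : ℕ) c) →
      ∫ ω in {ω | A tk ω = c tk} ∩ (Lpast L (tk : ℕ) l ∩ Apast A (tk : ℕ) c), Z ω ∂P
        = cP P {ω | A tk ω = c tk} (Lpast L (tk : ℕ) l ∩ Apast A (tk : ℕ) c) *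
            ∫ ω in Lpast L (tk : ℕ) l ∩ Apast A (tk : ℕ) c, Z ω ∂P) :
    ∀ t, t ≤ K → ∫ ω, dfun P A L c t ω * Z ω ∂P = ∫ ω, Z ω ∂P := by
  intro t
  induction t with
  | zero =>
    intro _
    have h1 : ∀ ω, dfun P A L c 0 ω = 1 := by
      intro ω
      unfold dfun dD
      rw [if_pos (fun k hk => absurd hk (by omega))]
      apply Finset.prod_eq_one
      intro k hk
      rw [Finset.mem_filter] at hk
      omega
    simp only [h1, one_mul]
  | succ t ih =>
    intro ht
    have ht' : t < K := ht
    set tk : Fin K := ⟨t, ht'⟩ with htk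
    set l₀ : 𝓛 := Classical.arbitrary 𝓛 with hl₀
    set S : Finset (Fin K → 𝓛) :=
      Finset.univ.filter (fun l => ∀ k : Fin K, t < (k : ℕ) → l k = l₀) with hS
    set G : (Fin K → 𝓛) → Set Ω := fun l => Lpast L t l ∩ Apast A t c with hG
    set Av : Set Ω := {ω | A tk ω = c tk} with hAv
    have hGm : ∀ l, MeasurableSet (G l) := fun l =>
      (measurableSet_Lpast' L hL t l).inter (measurableSet_Apast' A hA t c)
    have hAvm : MeasurableSet Av := measurableSet_Avt A hA tk (c tk)
    -- the canonical history of ω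
    set canon : Ω → (Fin K → 𝓛) := fun ω k => if (k : ℕ) ≤ t then L k ω else l₀ with hcanon
    have hcanonS : ∀ ω, canon ω ∈ S := by
      intro ω
      rw [hS, Finset.mem_filter]
      exact ⟨Finset.mem_univ _, fun k hk => by rw [hcanon]; simp; omega⟩
    have hcanonL : ∀ ω (j : Fin K), (j : ℕ) ≤ t → L j ω = canon ω j := by
      intro ω j hj; rw [hcanon]; simp [hj]
    have hmemG : ∀ ω, (∀ k : Fin K, (k : ℕ) < t → A k ω = c k) → ω ∈ G (canon ω) := by
      intro ω hω
      exact ⟨fun j hj => (hcanonL ω j hj).symm ▸ rfl, hω⟩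
    have huniq : ∀ ω (l : Fin K → 𝓛), l ∈ S → ω ∈ Lpast L t l → l = canon ω := by
      intro ω l hl hω
      rw [hS, Finset.mem_filter] at hl
      funext k
      by_cases hk : (k : ℕ) ≤ t
      · rw [← hω k hk]; exact hcanonL ω k hk
      · rw [hl.2 k (by omega)]
        simp only [hcanon]
        rw [if_neg (by omega)]
    -- decomposition of the two integrands
    have hE1 : (fun ω => dfun P A L c (t + 1) ω * Z ω)
        = fun ω => ∑ l ∈ S, Set.indicator (Av ∩ G l)
            (fun ω' => dD P A L c (t + 1) l c * Z ω') ω := by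
      funext ω
      by_cases hω : ∀ k : Fin K, (k : ℕ) < t + 1 → A k ω = c k
      · have hωt : ∀ k : Fin K, (k : ℕ) < t → A k ω = c k := fun k hk => hω k (by omega)
        have hmem : ω ∈ Av ∩ G (canon ω) :=
          ⟨hω tk (by simp [htk]), hmemG ω hωt⟩
        rw [Finset.sum_eq_single_of_mem (canon ω) (hcanonS ω)]
        · rw [Set.indicator_of_mem hmem]
          congr 1
          exact dfun_eq P (fun j hj => hcanonL ω j (by omega)) hω
        · intro l hl hne
          apply Set.indicator_of_notMem
          intro hmem'
          exact hne (huniq ω l hl hmem'.2.1)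
      · have h0 : dfun P A L c (t + 1) ω = 0 := by
          unfold dfun dD; rw [if_neg hω]
        rw [h0, zero_mul]
        symm
        apply Finset.sum_eq_zero
        intro l hl
        apply Set.indicator_of_notMem
        intro hmem'
        apply hω
        intro k hk
        by_cases hkt : (k : ℕ) < t
        · exact hmem'.2.2 k hkt
        · have : k = tk := by apply Fin.ext; simp [htk]; omega
          rw [this]; exact hmem'.1
    have hE2 : (fun ω => dfun P A L c t ω * Z ω)
        = fun ω => ∑ l ∈ S, Set.indicator (G l)
            (fun ω' => dD P A L c t l c * Z ω') ω := by
      funext ω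
      by_cases hω : ∀ k : Fin K, (k : ℕ) < t → A k ω = c k
      · have hmem : ω ∈ G (canon ω) := hmemG ω hω
        rw [Finset.sum_eq_single_of_mem (canon ω) (hcanonS ω)]
        · rw [Set.indicator_of_mem hmem]
          congr 1
          exact dfun_eq P (fun j hj => hcanonL ω j (by omega)) hω
        · intro l hl hne
          apply Set.indicator_of_notMem
          intro hmem'
          exact hne (huniq ω l hl hmem'.1)
      · have h0 : dfun P A L c t ω = 0 := by
          unfold dfun dD; rw [if_neg hω]
        rw [h0, zero_mul]
        symm
        apply Finset.sum_eq_zero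
        intro l hl
        apply Set.indicator_of_notMem
        intro hmem'
        exact hω hmem'.2
    -- the product split of the weight at time t
    have hfil : Finset.univ.filter (fun k : Fin K => (k : ℕ) < t + 1)
        = insert tk (Finset.univ.filter (fun k : Fin K => (k : ℕ) < t)) := by
      ext k
      simp only [Finset.mem_filter, Finset.mem_insert, Finset.mem_univ, true_and]
      constructor
      · intro h
        by_cases hkt : (k : ℕ) < t
        · exact Or.inr hkt
        · exact Or.inl (by apply Fin.ext; simp [htk]; omega)
      · rintro (h | h)
        · subst h; simp [htk]
        · omega
    have hnotmem : tk ∉ Finset.univ.filter (fun k : Fin K => (k : ℕ) < t) := by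
      simp [htk]
    have hdsplit : ∀ l : Fin K → 𝓛, dD P A L c (t + 1) l c
        = (cP P {ω' | A tk ω' = c tk} (G l))⁻¹ * dD P A L c t l c := by
      intro l
      unfold dD
      rw [if_pos (fun k _ => rfl), if_pos (fun k _ => rfl), hfil,
        Finset.prod_insert hnotmem]
    -- integrate both decompositions
    have hint1 : ∫ ω, dfun P A L c (t + 1) ω * Z ω ∂P
        = ∑ l ∈ S, dD P A L c (t + 1) l c * ∫ ω in Av ∩ G l, Z ω ∂P := by
      rw [hE1, integral_finset_sum]
      · refine Finset.sum_congr rfl fun l _ => ?_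
        rw [integral_indicator (hAvm.inter (hGm l)), integral_const_mul]
      · intro l _
        exact ((hZi.const_mul _).indicator (hAvm.inter (hGm l)))
    have hint2 : ∫ ω, dfun P A L c t ω * Z ω ∂P
        = ∑ l ∈ S, dD P A L c t l c * ∫ ω in G l, Z ω ∂P := by
      rw [hE2, integral_finset_sum]
      · refine Finset.sum_congr rfl fun l _ => ?_
        rw [integral_indicator (hGm l), integral_const_mul]
      · intro l _
        exact ((hZi.const_mul _).indicator (hGm l))
    rw [hint1, ← ih (by omega), hint2]
    refine Finset.sum_congr rfl fun l _ => ?_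
    by_cases hPG : P (G l) = 0
    · have hz1 : ∫ ω in Av ∩ G l, Z ω ∂P = 0 := by
        apply setIntegral_measure_zero
        exact le_antisymm (le_trans (measure_mono Set.inter_subset_right) hPG.le) (zero_le)
      have hz2 : ∫ ω in G l, Z ω ∂P = 0 := setIntegral_measure_zero _ hPG
      rw [hz1, hz2, mul_zero, mul_zero]
    · have hpos : 0 < P (G l) := lt_of_le_of_ne (zero_le) (Ne.symm hPG)
      have hp := hA3 tk (c tk) l c (by rw [hG] at hpos; exact_mod_cast hpos)
      have hZl := hZ tk l (by rw [hG] at hpos; exact_mod_cast hpos)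
      have hGeq : Lpast L (tk : ℕ) l ∩ Apast A (tk : ℕ) c = G l := rfl
      rw [hGeq] at hZl hp
      rw [hZl, hdsplit l]
      have hpne : cP P {ω' | A tk ω' = c tk} (G l) ≠ 0 := hp.ne'
      have : cP P {ω | A tk ω = c tk} (G l) = cP P {ω' | A tk ω' = c tk} (G l) := rfl
      rw [this]
      field_simp

/-- The "numerator" constant: product of treatment propensities along `c`. -/
noncomputable def numc (A : Fin K → Ω → Bool) (c : Fin K → Bool) : ℝ :=
  ∏ k : Fin K, cP P {ω' | A k ω' = c k} (Apast A (k : ℕ) c)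

lemma numc_eq [IsProbabilityMeasure P] (A : Fin K → Ω → Bool) (c : Fin K → Bool) :
    numc P A c = (P (Apast A K c)).toReal := by
  rw [telescope P A c K le_rfl, numc,
    Finset.filter_true_of_mem (fun k _ => k.isLt)]

lemma indicator_Wsw_eq (A : Fin K → Ω → Bool) (L : Fin K → Ω → 𝓛)
    (c : Fin K → Bool) (f fc : Ω → ℝ)
    (hfc : ∀ ω, (∀ k, A k ω = c k) → f ω = fc ω) (ω : Ω) :
    Set.indicator (Apast A K c) (fun ω' => Wsw P A L ω' * f ω') ω
      = numc P A c * (dfun P A L c K ω * fc ω) := by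
  by_cases hω : ω ∈ Apast A K c
  · have hc : ∀ k, A k ω = c k := fun k => hω k k.isLt
    rw [Set.indicator_of_mem hω, hfc ω hc]
    have hAc : (fun j => A j ω) = c := funext hc
    have hW : Wsw P A L ω = ∏ k : Fin K,
        cP P {ω' | A k ω' = c k} (Apast A (k : ℕ) c) /
          cP P {ω' | A k ω' = c k} (Lpast L (k : ℕ) (fun j => L j ω) ∩ Apast A (k : ℕ) c) := by
      unfold Wsw
      simp only [hAc, hc]
    have hd : dfun P A L c K ω = ∏ k : Fin K,
        (cP P {ω' | A k ω' = c k} (Lpast L (k : ℕ) (fun j => L j ω) ∩ Apast A (k : ℕ) c))⁻¹ := by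
      unfold dfun dD
      rw [if_pos (fun k _ => hc k), Finset.filter_true_of_mem (fun k _ => k.isLt)]
    rw [hW, hd, numc, Finset.prod_div_distrib, Finset.prod_inv_distrib, div_eq_mul_inv]
    ring
  · rw [Set.indicator_of_notMem hω]
    have hd : dfun P A L c K ω = 0 := by
      unfold dfun dD
      rw [if_neg (fun h => hω (fun k hk => h k hk))]
    rw [hd]
    ring

lemma Apast_concat {m : ℕ} (hmK : m ≤ K) (A : Fin K → Ω → Bool) (a : Bool)
    (b : {k : Fin K // (k : ℕ) < K - m} → Bool) :
    ApastV A m b ∩ Etr A m a = Apast A K (concatRegime m b (fun _ => a)) := by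
  ext ω
  simp only [ApastV, Etr, EtrV, Apast, concatRegime, Set.mem_inter_iff, Set.mem_setOf_eq]
  constructor
  · rintro ⟨h1, h2⟩ k _
    by_cases hk : (k : ℕ) < K - m
    · rw [dif_pos hk]; exact h1 k hk
    · rw [dif_neg hk]; exact h2 k (by omega)
  · intro h
    constructor
    · intro k hk
      have := h k k.isLt
      rwa [dif_pos hk] at this
    · intro k hk
      have := h k k.isLt
      rwa [dif_neg (by omega)] at this

lemma indicator_Etr_sum {m : ℕ} (hmK : m ≤ K) (A : Fin K → Ω → Bool) (a : Bool)
    (f : Ω → ℝ) (ω : Ω) :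
    Set.indicator (Etr A m a) f ω
      = ∑ b : ({k : Fin K // (k : ℕ) < K - m} → Bool),
          Set.indicator (Apast A K (concatRegime m b (fun _ => a))) f ω := by
  by_cases hω : ω ∈ Etr A m a
  · set bω : {k : Fin K // (k : ℕ) < K - m} → Bool := fun k => A k.1 ω with hbω
    have hmem : ω ∈ Apast A K (concatRegime m bω (fun _ => a)) := by
      intro k _
      by_cases hk : (k : ℕ) < K - m
      · rw [concatRegime, dif_pos hk]
      · rw [concatRegime, dif_neg hk]
        exact hω k (by omega)
    rw [Set.indicator_of_mem hω, Finset.sum_eq_single_of_mem bω (Finset.mem_univ _)]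
    · rw [Set.indicator_of_mem hmem]
    · intro b _ hne
      apply Set.indicator_of_notMem
      intro hmem'
      apply hne
      funext k
      have := hmem' k.1 k.1.isLt
      rw [concatRegime, dif_pos k.2] at this
      rw [hbω]
      simp only [← this]
  · rw [Set.indicator_of_notMem hω]
    symm
    apply Finset.sum_eq_zero
    intro b _
    apply Set.indicator_of_notMem
    intro hmem'
    apply hω
    intro k hk
    have := hmem' k k.isLt
    rw [concatRegime] at this
    rwa [dif_neg (by omega : ¬ (k : ℕ) < K - m)] at this

/-- One side of the SW estimand characterization. -/
lemma sw_side [IsProbabilityMeasure P] {m : ℕ} (hmK : m ≤ K)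
    (A : Fin K → Ω → Bool) (L : Fin K → Ω → 𝓛)
    (hA : ∀ k, Measurable (A k)) (hL : ∀ k, Measurable (L k))
    (Y : Ω → ℝ) (Ypot : (Fin K → Bool) → Ω → ℝ)
    (hYpm : ∀ a, Measurable (Ypot a)) (hYpi : ∀ a, Integrable (Ypot a) P)
    (hA1 : A1ok A Y Ypot) (hA2 : A2ok P A L Ypot) (hA3 : A3ok P A L)
    (a : Bool) (hpos : 0 < P (Etr A m a)) :
    (∫ ω in Etr A m a, Wsw P A L ω * Y ω ∂P) / (∫ ω in Etr A m a, Wsw P A L ω ∂P)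
      = ∑ b : ({k : Fin K // (k : ℕ) < K - m} → Bool),
          (∫ ω, Ypot (concatRegime m b (fun _ => a)) ω ∂P) *
            cP P (ApastV A m b) (Etr A m a) := by
  set cb : ({k : Fin K // (k : ℕ) < K - m} → Bool) → (Fin K → Bool) :=
    fun b => concatRegime m b (fun _ => a) with hcb
  have hEtrm : MeasurableSet (Etr A m a) := measurableSet_Etr' A hA m a
  -- conditional independence hypotheses for `key_integral`
  have hZY : ∀ b (tk : Fin K) (l : Fin K → 𝓛),
      0 < P (Lpast L (tk : ℕ) l ∩ Apast A (tk : ℕ) (cb b)) →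
      ∫ ω in {ω | A tk ω = cb b tk} ∩ (Lpast L (tk : ℕ) l ∩ Apast A (tk : ℕ) (cb b)),
          Ypot (cb b) ω ∂P
        = cP P {ω | A tk ω = cb b tk} (Lpast L (tk : ℕ) l ∩ Apast A (tk : ℕ) (cb b)) *
            ∫ ω in Lpast L (tk : ℕ) l ∩ Apast A (tk : ℕ) (cb b), Ypot (cb b) ω ∂P := by
    intro b tk l hposG
    exact indep_setIntegral P (hYpm (cb b))
      ((measurableSet_Lpast' L hL _ l).inter (measurableSet_Apast' A hA _ (cb b)))
      (measurableSet_Avt A hA tk (cb b tk)) hposG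
      (fun B hB => hA2 tk (cb b) B hB (cb b tk) l (cb b) hposG)
  have hZ1 : ∀ (c : Fin K → Bool) (tk : Fin K) (l : Fin K → 𝓛),
      0 < P (Lpast L (tk : ℕ) l ∩ Apast A (tk : ℕ) c) →
      ∫ ω in {ω | A tk ω = c tk} ∩ (Lpast L (tk : ℕ) l ∩ Apast A (tk : ℕ) c),
          (1 : ℝ) ∂P
        = cP P {ω | A tk ω = c tk} (Lpast L (tk : ℕ) l ∩ Apast A (tk : ℕ) c) *
            ∫ ω in Lpast L (tk : ℕ) l ∩ Apast A (tk : ℕ) c, (1 : ℝ) ∂P := by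
    intro c tk l hposG
    set G := Lpast L (tk : ℕ) l ∩ Apast A (tk : ℕ) c
    have hGtR : (P G).toReal ≠ 0 := by
      simp [ENNReal.toReal_eq_zero_iff, hposG.ne', measure_ne_top P G]
    rw [setIntegral_const, setIntegral_const, smul_eq_mul, smul_eq_mul,
      mul_one, mul_one, cP]
    simp only [measureReal_def]
    rw [div_mul_cancel₀ _ hGtR]
  have hkeyY : ∀ b, ∫ ω, dfun P A L (cb b) K ω * Ypot (cb b) ω ∂P
      = ∫ ω, Ypot (cb b) ω ∂P := fun b =>
    key_integral P A L hA hL (cb b) hA3 (Ypot (cb b)) (hYpm _) (hYpi _) (hZY b) K le_rfl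
  have hkey1 : ∀ (c : Fin K → Bool), ∫ ω, dfun P A L c K ω * (1 : ℝ) ∂P = 1 := by
    intro c
    rw [key_integral P A L hA hL c hA3 (fun _ => (1 : ℝ)) measurable_const
      (integrable_const _) (hZ1 c) K le_rfl]
    simp
  -- integrability of the decomposed integrands
  have hintY : ∀ (c : Fin K → Bool), Integrable (fun ω => dfun P A L c K ω * Ypot c ω) P :=
    fun c => integrable_hist_mul P A L hA hL (dD P A L c K) (hYpi c)
  have hint1 : ∀ (c : Fin K → Bool), Integrable (fun ω => dfun P A L c K ω * (1 : ℝ)) P :=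
    fun c => integrable_hist_mul P A L hA hL (dD P A L c K) (integrable_const _)
  -- numerator
  have hnum : ∫ ω in Etr A m a, Wsw P A L ω * Y ω ∂P
      = ∑ b, numc P A (cb b) * ∫ ω, Ypot (cb b) ω ∂P := by
    rw [← integral_indicator hEtrm]
    have hpt : (fun ω => Set.indicator (Etr A m a) (fun ω' => Wsw P A L ω' * Y ω') ω)
        = fun ω => ∑ b, numc P A (cb b) * (dfun P A L (cb b) K ω * Ypot (cb b) ω) := by
      funext ω
      rw [indicator_Etr_sum hmK A a _ ω]
      refine Finset.sum_congr rfl fun b _ => ?_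
      exact indicator_Wsw_eq P A L (cb b) Y (Ypot (cb b)) (fun ω' h => hA1 (cb b) ω' h) ω
    rw [hpt, integral_finset_sum _ (fun b _ => (hintY (cb b)).const_mul _)]
    refine Finset.sum_congr rfl fun b _ => ?_
    rw [integral_const_mul, hkeyY b]
  -- denominator
  have hden : ∫ ω in Etr A m a, Wsw P A L ω ∂P = ∑ b, numc P A (cb b) := by
    rw [← integral_indicator hEtrm]
    have hpt : (fun ω => Set.indicator (Etr A m a) (Wsw P A L) ω)
        = fun ω => ∑ b, numc P A (cb b) * (dfun P A L (cb b) K ω * (1 : ℝ)) := by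
      funext ω
      have h1 : Set.indicator (Etr A m a) (Wsw P A L) ω
          = Set.indicator (Etr A m a) (fun ω' => Wsw P A L ω' * (1 : ℝ)) ω := by
        simp
      rw [h1, indicator_Etr_sum hmK A a _ ω]
      refine Finset.sum_congr rfl fun b _ => ?_
      exact indicator_Wsw_eq P A L (cb b) (fun _ => 1) (fun _ => 1) (fun _ _ => rfl) ω
    rw [hpt, integral_finset_sum _ (fun b _ => (hint1 (cb b)).const_mul _)]
    refine Finset.sum_congr rfl fun b _ => ?_
    rw [integral_const_mul, hkey1 (cb b), mul_one]
  -- total mass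
  have hPE : ∑ b, numc P A (cb b) = (P (Etr A m a)).toReal := by
    have h1 : (P (Etr A m a)).toReal = ∫ ω, Set.indicator (Etr A m a) (fun _ => (1 : ℝ)) ω ∂P := by
      rw [integral_indicator hEtrm, setIntegral_const, smul_eq_mul, mul_one, measureReal_def]
    have h2 : (fun ω => Set.indicator (Etr A m a) (fun _ => (1 : ℝ)) ω)
        = fun ω => ∑ b, Set.indicator (Apast A K (cb b)) (fun _ => (1 : ℝ)) ω := by
      funext ω
      exact indicator_Etr_sum hmK A a _ ω
    rw [h1, h2, integral_finset_sum _ (fun b _ =>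
      (integrable_const (1 : ℝ)).indicator (measurableSet_Apast' A hA K (cb b)))]
    refine Finset.sum_congr rfl fun b _ => ?_
    rw [integral_indicator (measurableSet_Apast' A hA K (cb b)), setIntegral_const,
      smul_eq_mul, mul_one, numc_eq, measureReal_def]
  have hPEne : (P (Etr A m a)).toReal ≠ 0 := by
    simp [ENNReal.toReal_eq_zero_iff, hpos.ne', measure_ne_top P _]
  rw [hnum, hden, hPE, Finset.sum_div]
  refine Finset.sum_congr rfl fun b _ => ?_
  rw [numc_eq, cP, ← Apast_concat hmK A a b]
  field_simp
  ring

end AuxSW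

/-- Characterization of the SW estimand (equation (B.2.2)). -/
theorem sw_estimand_characterization
    {Ω : Type*} [MeasurableSpace Ω] {𝓛 : Type*} [MeasurableSpace 𝓛]
    [Fintype 𝓛] [Nonempty 𝓛] [MeasurableSingletonClass 𝓛]
    (P : Measure Ω) [IsProbabilityMeasure P]
    {K m : ℕ} (hK : 1 ≤ K) (hm1 : 1 ≤ m) (hmK : m ≤ K)
    (A : Fin K → Ω → Bool) (L : Fin K → Ω → 𝓛)
    (hA : ∀ k, Measurable (A k)) (hL : ∀ k, Measurable (L k))
    (Y : Ω → ℝ) (hY : Measurable Y)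
    (Ypot : (Fin K → Bool) → Ω → ℝ)
    (hYpm : ∀ a, Measurable (Ypot a)) (hYpi : ∀ a, Integrable (Ypot a) P)
    (hpos1 : 0 < P (Etr A m true)) (hpos0 : 0 < P (Etr A m false))
    (hA1 : A1ok A Y Ypot) (hA2 : A2ok P A L Ypot) (hA3 : A3ok P A L) :
    θW P A m (Wsw P A L) Y =
      (∑ b : ({k : Fin K // (k : ℕ) < K - m} → Bool),
          (∫ ω, Ypot (concatRegime m b (fun _ => true)) ω ∂P) *
            cP P (ApastV A m b) (Etr A m true)) -
        ∑ b : ({k : Fin K // (k : ℕ) < K - m} → Bool),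
          (∫ ω, Ypot (concatRegime m b (fun _ => false)) ω ∂P) *
            cP P (ApastV A m b) (Etr A m false) := by
  rw [θW,
    sw_side P hmK A L hA hL Y Ypot hYpm hYpi hA1 hA2 hA3 true hpos1,
    sw_side P hmK A L hA hL Y Ypot hYpm hYpi hA1 hA2 hA3 false hpos0]

end MSMPaper
end

section
/- Core conditional-independence lemma of Theorem 6: Let F : ℝ × (S → ℝ) → ℝ, f : ℝ → ℝ, and G : ℝ × (T → ℝ) → ℝ be measurable, and define X(ω) = F(ε_{i₀}(ω), (ε_i(ω))_{i∈S}), W₀(ω) = f(ε_{i₀}(ω)), and Z(ω) = G(W₀(ω), (ε_j(ω))_{j∈T}). Then X and Z are conditionally independent given the σ-algebra generated by W₀. (In the structural causal model (5), under (A8) and (A9) the potential outcome Y^{ā} is a measurable function of (ε_{L(0)}, ε_{L(K−m+1)}, …, ε_{L(K−1)}, ε_Y) and the treatment history Ā(K−m−1) is a measurable function of (L(0), ε_{L(1)}, …, ε_{L(K−m−1)}, ε_{A(0)}, …, ε_{A(K−m−1)}) with L(0) = f_{L(0)}(ε_{L(0)}), so this lemma yields assumption (A7)′: Y^{ā} is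 conditionally independent of Ā(K−m−1) given L(0).) -/
open MeasureTheory ProbabilityTheory

open Set in
lemma aux_condexp_inter_indep {Ω : Type*} {m' m₁ m₂ : MeasurableSpace Ω}
    {mΩ : MeasurableSpace Ω} {μ : Measure Ω} [IsProbabilityMeasure μ]
    (h1 : m₁ ≤ mΩ) (h2 : m₂ ≤ mΩ) (hm'1 : m' ≤ m₁)
    (hindep : ProbabilityTheory.Indep m₁ m₂ μ)
    {t b : Set Ω} (ht : MeasurableSet[m₁] t) (hb : MeasurableSet[m₂] b) :
    (fun ω => (μ b).toReal * (μ⟦t | m'⟧) ω) =ᵐ[μ] μ⟦t ∩ b | m'⟧ := by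
  have hm' : m' ≤ mΩ := hm'1.trans h1
  have htm : MeasurableSet t := h1 _ ht
  have hbm : MeasurableSet b := h2 _ hb
  have hint : Integrable ((t ∩ b).indicator (fun _ => (1:ℝ))) μ :=
    (integrable_const 1).indicator (htm.inter hbm)
  refine ae_eq_condExp_of_forall_setIntegral_eq hm' hint
    (fun s _ _ => (integrable_condExp.const_mul _).integrableOn) (fun s hs hμs => ?_) ?_
  · have hintt : Integrable (t.indicator (fun _ => (1:ℝ))) μ :=
      (integrable_const 1).indicator htm
    rw [integral_const_mul, setIntegral_condExp hm' hintt hs,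
      setIntegral_indicator htm, setIntegral_indicator (htm.inter hbm),
      setIntegral_const, setIntegral_const]
    have hkey : μ (s ∩ (t ∩ b)) = μ (s ∩ t) * μ b := by
      rw [← Set.inter_assoc]
      exact (Indep_iff _ _ _).1 hindep _ _ ((hm'1 _ hs).inter ht) hb
    simp only [smul_eq_mul, mul_one]
    rw [measureReal_def, measureReal_def, hkey, ENNReal.toReal_mul]
    ring
  · exact ((stronglyMeasurable_condExp (m := m')).const_mul _).aestronglyMeasurable

lemma aux_condIndep_sup {Ω : Type*} {m' m₁ m₂ : MeasurableSpace Ω}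
    {mΩ : MeasurableSpace Ω} [StandardBorelSpace Ω]
    (μ : Measure Ω) [IsProbabilityMeasure μ]
    (h1 : m₁ ≤ mΩ) (h2 : m₂ ≤ mΩ) (hm'1 : m' ≤ m₁)
    (hindep : ProbabilityTheory.Indep m₁ m₂ μ) :
    ProbabilityTheory.CondIndep m' m₁ (m' ⊔ m₂) (hm'1.trans h1) μ := by
  have hm' : m' ≤ mΩ := hm'1.trans h1
  refine CondIndepSets.condIndep (p1 := {s | MeasurableSet[m₁] s})
    (p2 := {u | ∃ s bb, MeasurableSet[m'] s ∧ MeasurableSet[m₂] bb ∧ u = s ∩ bb})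
    h1 (sup_le hm' h2) ?_ ?_ ?_ ?_ ?_
  · exact fun s hs t ht _ => hs.inter ht
  · rintro u ⟨s, bb, hs, hbb, rfl⟩ v ⟨s', bb', hs', hbb', rfl⟩ _
    exact ⟨s ∩ s', bb ∩ bb', hs.inter hs', hbb.inter hbb', by ac_rfl⟩
  · exact (@MeasurableSpace.generateFrom_measurableSet Ω m₁).symm
  · refine le_antisymm (sup_le ?_ ?_) (MeasurableSpace.generateFrom_le ?_)
    · intro u hu
      exact MeasurableSpace.measurableSet_generateFrom
        ⟨u, Set.univ, hu, MeasurableSet.univ, (Set.inter_univ u).symm⟩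
    · intro u hu
      exact MeasurableSpace.measurableSet_generateFrom
        ⟨Set.univ, u, MeasurableSet.univ, hu, (Set.univ_inter u).symm⟩
    · rintro u ⟨s, bb, hs, hbb, rfl⟩
      exact MeasurableSet.inter ((le_sup_left : m' ≤ m' ⊔ m₂) _ hs)
        ((le_sup_right : m₂ ≤ m' ⊔ m₂) _ hbb)
  · rw [condIndepSets_iff]
    rotate_left
    · exact fun s hs => h1 _ hs
    · rintro u ⟨s, bb, hs, hbb, rfl⟩
      exact ((hm' _ hs).inter (h2 _ hbb))
    rintro t1 u ht1 ⟨s, bb, hs, hbb, rfl⟩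
    have hA : (fun ω => (μ bb).toReal * (μ⟦t1 ∩ s | m'⟧) ω) =ᵐ[μ] μ⟦(t1 ∩ s) ∩ bb | m'⟧ :=
      aux_condexp_inter_indep h1 h2 hm'1 hindep (ht1.inter (hm'1 _ hs)) hbb
    have hB : μ⟦t1 ∩ s | m'⟧ =ᵐ[μ] s.indicator (μ⟦t1 | m'⟧) := by
      have h := condExp_indicator (m := m') (μ := μ)
        ((integrable_const (1:ℝ)).indicator (h1 _ ht1)) hs
      have he : s.indicator (t1.indicator fun _ => (1:ℝ)) = (t1 ∩ s).indicator fun _ => (1:ℝ) := by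
        rw [Set.indicator_indicator, Set.inter_comm]
      rwa [he] at h
    have hC : μ⟦s ∩ bb | m'⟧ =ᵐ[μ] fun ω =>
        (μ bb).toReal * s.indicator (fun _ => (1:ℝ)) ω := by
      have h := (aux_condexp_inter_indep h1 h2 hm'1 hindep (hm'1 _ hs) hbb).symm
      have hsm : StronglyMeasurable[m'] (s.indicator fun _ => (1:ℝ)) :=
        stronglyMeasurable_const.indicator hs
      have he : μ⟦s | m'⟧ = s.indicator (fun _ => (1:ℝ)) :=
        condExp_of_stronglyMeasurable hm' hsm ((integrable_const 1).indicator (hm' _ hs))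
      rwa [he] at h
    have hassoc : t1 ∩ (s ∩ bb) = (t1 ∩ s) ∩ bb := (Set.inter_assoc _ _ _).symm
    rw [hassoc]
    filter_upwards [hA, hB, hC] with ω hAω hBω hCω
    rw [Pi.mul_apply, hCω, ← hAω, hBω]
    by_cases hω : ω ∈ s
    · simp only [Set.indicator_of_mem hω]
      ring
    · simp [Set.indicator_of_notMem hω]

lemma aux_condIndepFun {Ω : Type*} {m' m₁ m₂ : MeasurableSpace Ω}
    {mΩ : MeasurableSpace Ω} [StandardBorelSpace Ω]
    (μ : Measure Ω) [IsProbabilityMeasure μ]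
    (h1 : m₁ ≤ mΩ) (h2 : m₂ ≤ mΩ) (hm'1 : m' ≤ m₁)
    (hindep : ProbabilityTheory.Indep m₁ m₂ μ)
    {β γ : Type*} {mβ : MeasurableSpace β} {mγ : MeasurableSpace γ}
    {X : Ω → β} {Z : Ω → γ}
    (hX : MeasurableSpace.comap X mβ ≤ m₁)
    (hZ : MeasurableSpace.comap Z mγ ≤ m' ⊔ m₂)
    (hm' : m' ≤ mΩ) :
    ProbabilityTheory.CondIndepFun m' hm' X Z μ := by
  rw [condIndepFun_iff_condIndep]
  exact condIndep_of_condIndep_of_le_right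
    (condIndep_of_condIndep_of_le_left (aux_condIndep_sup μ h1 h2 hm'1 hindep) hX) hZ

lemma aux_measurable_pi {Ω ι : Type*} {mΩ : MeasurableSpace Ω} {g : ι → Ω → ℝ}
    (hg : ∀ i, Measurable[mΩ] (g i)) :
    Measurable[mΩ] (fun ω => (fun i => g i ω)) :=
  measurable_pi_iff.mpr hg


/-- Core conditional-independence lemma for Theorem 6: if `(ε_i)_{i∈I}` are independent,
`X = F(ε_{i₀}, ε_S)`, `W₀ = f(ε_{i₀})`, and `Z = G(W₀, ε_T)` with `i₀ ∉ S`, `i₀ ∉ T`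
and `S`, `T` disjoint, then `X` and `Z` are conditionally independent given `σ(W₀)`. -/
theorem condIndep_of_structural
    {Ω : Type*} [MeasurableSpace Ω] [StandardBorelSpace Ω]
    (P : Measure Ω) [IsProbabilityMeasure P]
    {I : Type*} (i₀ : I) (ε : I → Ω → ℝ)
    (hε : ∀ i, Measurable (ε i))
    (hind : iIndepFun ε P)
    (S T : Finset I) (hS : i₀ ∉ S) (hT : i₀ ∉ T) (hST : Disjoint S T)
    (F : ℝ × (S → ℝ) → ℝ) (hF : Measurable F)
    (f : ℝ → ℝ) (hf : Measurable f)
    (G : ℝ × (T → ℝ) → ℝ) (hG : Measurable G) :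
    CondIndepFun (MeasurableSpace.comap (fun ω => f (ε i₀ ω)) inferInstance)
      ((hf.comp (hε i₀)).comap_le)
      (fun ω => F (ε i₀ ω, fun i : S => ε i ω))
      (fun ω => G (f (ε i₀ ω), fun j : T => ε j ω)) P := by
  have hi : iIndep (fun i => MeasurableSpace.comap (ε i) inferInstance) P :=
    (iIndepFun_iff_iIndep _ _ _).mp hind
  have hdisj : Disjoint (insert i₀ ↑S : Set I) (↑T : Set I) := by
    rw [Set.disjoint_left]
    rintro a (rfl | ha) haT
    · exact hT (Finset.mem_coe.mp haT)
    · exact (Finset.disjoint_left.mp hST (Finset.mem_coe.mp ha)) (Finset.mem_coe.mp haT)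
  have hindep : ProbabilityTheory.Indep
      (⨆ i ∈ (insert i₀ ↑S : Set I), MeasurableSpace.comap (ε i) inferInstance)
      (⨆ j ∈ (↑T : Set I), MeasurableSpace.comap (ε j) inferInstance) P :=
    indep_iSup_of_disjoint (fun i => (hε i).comap_le) hi hdisj
  have hε₀m₁ : Measurable[⨆ i ∈ (insert i₀ ↑S : Set I),
      MeasurableSpace.comap (ε i) inferInstance] (ε i₀) :=
    measurable_iff_comap_le.mpr
      (le_iSup₂ (f := fun i (_ : i ∈ (insert i₀ ↑S : Set I)) =>
        MeasurableSpace.comap (ε i) inferInstance) i₀ (Set.mem_insert _ _))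
  have htupS : Measurable[⨆ i ∈ (insert i₀ ↑S : Set I),
      MeasurableSpace.comap (ε i) inferInstance]
      (fun ω => (fun i : S => ε i ω)) := by
    refine aux_measurable_pi fun i => ?_
    exact measurable_iff_comap_le.mpr
      (le_iSup₂ (f := fun i (_ : i ∈ (insert i₀ ↑S : Set I)) =>
        MeasurableSpace.comap (ε i) inferInstance) (i : I)
        (Set.mem_insert_of_mem _ (Finset.mem_coe.mpr i.2)))
  have hX : Measurable[⨆ i ∈ (insert i₀ ↑S : Set I),
      MeasurableSpace.comap (ε i) inferInstance]
      (fun ω => F (ε i₀ ω, fun i : S => ε i ω)) :=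
    hF.comp (hε₀m₁.prodMk htupS)
  have hW₀ : Measurable[MeasurableSpace.comap (fun ω => f (ε i₀ ω)) inferInstance ⊔
      ⨆ j ∈ (↑T : Set I), MeasurableSpace.comap (ε j) inferInstance]
      (fun ω => f (ε i₀ ω)) :=
    (measurable_iff_comap_le.mpr le_rfl).mono le_sup_left le_rfl
  have htupT : Measurable[MeasurableSpace.comap (fun ω => f (ε i₀ ω)) inferInstance ⊔
      ⨆ j ∈ (↑T : Set I), MeasurableSpace.comap (ε j) inferInstance]
      (fun ω => (fun j : T => ε j ω)) := by
    refine aux_measurable_pi fun j => ?_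
    refine Measurable.mono ?_ le_sup_right le_rfl
    exact measurable_iff_comap_le.mpr
      (le_iSup₂ (f := fun j (_ : j ∈ (↑T : Set I)) =>
        MeasurableSpace.comap (ε j) inferInstance) (j : I) (Finset.mem_coe.mpr j.2))
  have hZ : Measurable[MeasurableSpace.comap (fun ω => f (ε i₀ ω)) inferInstance ⊔
      ⨆ j ∈ (↑T : Set I), MeasurableSpace.comap (ε j) inferInstance]
      (fun ω => G (f (ε i₀ ω), fun j : T => ε j ω)) :=
    hG.comp (hW₀.prodMk htupT)
  exact aux_condIndepFun P (iSup₂_le fun i _ => (hε i).comap_le)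
    (iSup₂_le fun j _ => (hε j).comap_le)
    (measurable_iff_comap_le.mp (hf.comp hε₀m₁)) hindep
    (measurable_iff_comap_le.mp hX) (measurable_iff_comap_le.mp hZ) _
end
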